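/- The optimal values of the multiple-counting and single-counting zone tariff design problems with arbitrary zones are incomparable in general, even on trees: there exists an instance of the zone tariff design problem on a tree with z*_MA < z*_SA (e.g., the path graph on vertices v_1,…,v_4 with one passenger per OD pair, OD pairs (v_1,v_2), (v_2,v_3), (v_3,v_4), (v_1,v_4) with reference prices 1, 2, 2, 3 and N = 2, where z*_MA = 0 < z*_SA), and there exists an instance on a tree with z*_SA < z*_MA (e.g., the path graph on vertices v_1,…,v_5 with one passenger per OD pair, OD pairs (v_1,v_2), (v_2,v_3), (v_2,v_4), (v_3,v_5) with reference prices 1, 2, 2, 3 and N = 5, where z*_SA = 0 < z*_MA). -/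

import Mathlib

open scoped Classical
noncomputable section

/-- A zone partition of the vertex set `V`: nonempty, pairwise disjoint zones covering `V`. -/
def IsZonePartition {V : Type*} (Z : Finset (Finset V)) : Prop :=
  (∀ A ∈ Z, A.Nonempty) ∧ (∀ A ∈ Z, ∀ B ∈ Z, A ≠ B → Disjoint A B) ∧
    ∀ v : V, ∃ A ∈ Z, v ∈ A

/-- `v` and `w` lie in a common zone of `Z`. -/
def SameZone {V : Type*} (Z : Finset (Finset V)) (v w : V) : Prop :=
  ∃ A ∈ Z, v ∈ A ∧ w ∈ A

/-- Multiple-counting zone function: one plus the number of zone borders crossed along `W`. -/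
def sigmaM {V : Type*} (Z : Finset (Finset V)) (W : List V) : ℕ :=
  1 + ((W.zip W.tail).filter (fun p => decide (¬ SameZone Z p.1 p.2))).length

/-- Single-counting zone function: the number of distinct zones met by `W`. -/
def sigmaS {V : Type*} (Z : Finset (Finset V)) (W : List V) : ℕ :=
  (Z.filter (fun A => ∃ v ∈ W, v ∈ A)).card

/-- A zone is connected if the induced subgraph is connected. -/
def ZoneConnected {V : Type*} (G : SimpleGraph V) (A : Finset V) : Prop :=
  (G.induce (A : Set V)).Connected

/-- Objective value of the zone tariff design problem. -/
def zoneObj {V ι : Type*} (D : Finset ι) (r : ι → ℝ) (t : ι → ℕ) (Wd : ι → List V)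
    (σ : Finset (Finset V) → List V → ℕ) (Z : Finset (Finset V)) (P : ℕ → ℝ) : ℝ :=
  ∑ d ∈ D, (t d : ℝ) * |r d - P (σ Z (Wd d))|

/-- Optimal (infimum) objective value over all feasible zone partitions and
nonnegative price functions. -/
def zStar {V ι : Type*} (D : Finset ι) (r : ι → ℝ) (t : ι → ℕ) (Wd : ι → List V)
    (σ : Finset (Finset V) → List V → ℕ) (feas : Finset (Finset V) → Prop) : ℝ :=
  sInf {x : ℝ | ∃ Z P, feas Z ∧ (∀ k, 0 ≤ P k) ∧ x = zoneObj D r t Wd σ Z P}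

/-- The path graph on four vertices. -/
def pathGraph4 : SimpleGraph (Fin 4) :=
  SimpleGraph.fromRel (fun i j => (i : ℕ) + 1 = (j : ℕ))

/-- The path graph on five vertices. -/
def pathGraph5 : SimpleGraph (Fin 5) :=
  SimpleGraph.fromRel (fun i j => (i : ℕ) + 1 = (j : ℕ))


section Aux

lemma abs_pair (r1 r2 x : ℝ) : |r1 - r2| ≤ |r1 - x| + |r2 - x| := by
  have h : r1 - r2 = (r1 - x) + (x - r2) := by ring
  rw [h]
  calc |(r1 - x) + (x - r2)| ≤ |r1 - x| + |x - r2| := abs_add_le _ _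
    _ = |r1 - x| + |r2 - x| := by rw [abs_sub_comm x r2]

lemma vec4_three {α : Type*} (a b c d : α) : ![a, b, c, d] 3 = d := rfl

lemma sigmaM_single {V : Type*} (Z : Finset (Finset V)) (x : V) : sigmaM Z [x] = 1 := by
  simp [sigmaM]

lemma sigmaM_cons {V : Type*} (Z : Finset (Finset V)) (x y : V) (l : List V) :
    sigmaM Z (x :: y :: l) = (if SameZone Z x y then 0 else 1) + sigmaM Z (y :: l) := by
  simp only [sigmaM, List.tail_cons, List.zip_cons_cons, List.filter_cons]
  by_cases h : SameZone Z x y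
  · simp [h]
  · simp [h]; omega

lemma one_le_sigmaS {V : Type*} {Z : Finset (Finset V)} (hZ : IsZonePartition Z)
    {v : V} {W : List V} (hv : v ∈ W) : 1 ≤ sigmaS Z W := by
  obtain ⟨A, hA, hvA⟩ := hZ.2.2 v
  refine Nat.one_le_iff_ne_zero.2 (fun h => ?_)
  have hmem : A ∈ Z.filter (fun A => ∃ v ∈ W, v ∈ A) := Finset.mem_filter.2 ⟨hA, ⟨v, hv, hvA⟩⟩
  simp only [sigmaS, Finset.card_eq_zero] at h
  rw [h] at hmem
  exact absurd hmem (Finset.notMem_empty _)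

lemma sigmaS_le_card {V : Type*} (Z : Finset (Finset V)) (W : List V) :
    sigmaS Z W ≤ Z.card := Finset.card_filter_le _ _

lemma conflict (P : ℕ → ℝ) (a b c e : ℕ) (ha : a ≤ 1) (hb : b ≤ 1) (hc : c ≤ 1)
    (he : e ≤ 1) :
    1 ≤ |1 - P (a + 1)| + |2 - P (b + 1)| + |2 - P (b + (c + 1))| + |3 - P (c + (e + 1))| := by
  have h12 : ∀ n, (1 : ℝ) ≤ |1 - P n| + |2 - P n| := fun n => by
    have := abs_pair 1 2 (P n); norm_num at this; linarith
  have h13 : ∀ n, (2 : ℝ) ≤ |1 - P n| + |3 - P n| := fun n => by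
    have := abs_pair 1 3 (P n); norm_num at this; linarith
  have h23 : ∀ n, (1 : ℝ) ≤ |2 - P n| + |3 - P n| := fun n => by
    have := abs_pair 2 3 (P n); norm_num at this; linarith
  interval_cases a <;> interval_cases b <;> interval_cases c <;> interval_cases e <;>
    norm_num <;>
    linarith [h12 1, h12 2, h12 3, h13 1, h13 2, h13 3, h23 1, h23 2, h23 3,
      abs_nonneg (1 - P 1), abs_nonneg (1 - P 2), abs_nonneg (1 - P 3),
      abs_nonneg (2 - P 1), abs_nonneg (2 - P 2), abs_nonneg (2 - P 3),
      abs_nonneg (3 - P 1), abs_nonneg (3 - P 2), abs_nonneg (3 - P 3)]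

/-- The partition `{{0,1,3},{2}}` of `Fin 4`. -/
def Z4 : Finset (Finset (Fin 4)) := {{0, 1, 3}, {2}}

/-- The partition `{{0,1,3},{2},{4}}` of `Fin 5`. -/
def Z5 : Finset (Finset (Fin 5)) := {{0, 1, 3}, {2}, {4}}

lemma hZ4 : IsZonePartition Z4 := by
  unfold IsZonePartition Z4
  refine ⟨by decide, fun A hA B hB hne => Finset.disjoint_left.2 ?_, by decide⟩
  revert hne; revert hA hB; revert A B; decide

lemma hZ5 : IsZonePartition Z5 := by
  unfold IsZonePartition Z5
  refine ⟨by decide, fun A hA B hB hne => Finset.disjoint_left.2 ?_, by decide⟩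
  revert hne; revert hA hB; revert A B; decide

lemma obj_nonneg {V ι : Type*} (D : Finset ι) (r : ι → ℝ) (t : ι → ℕ) (Wd : ι → List V)
    (σ : Finset (Finset V) → List V → ℕ) (Z : Finset (Finset V)) (P : ℕ → ℝ) :
    0 ≤ zoneObj D r t Wd σ Z P :=
  Finset.sum_nonneg fun d _ => mul_nonneg (Nat.cast_nonneg _) (abs_nonneg _)

lemma partA :
    zStar (Finset.univ : Finset (Fin 4)) (![1, 2, 2, 3] : Fin 4 → ℝ) (fun _ => 1)
      ![([0, 1] : List (Fin 4)), [1, 2], [2, 3], [0, 1, 2, 3]] sigmaM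
      (fun Z => IsZonePartition Z ∧ Z.card ≤ 2) = 0 := by
  have h01 : SameZone Z4 0 1 := by unfold SameZone Z4; decide
  have h12 : ¬ SameZone Z4 1 2 := by unfold SameZone Z4; decide
  have h23 : ¬ SameZone Z4 2 3 := by unfold SameZone Z4; decide
  have hobj : zoneObj (Finset.univ : Finset (Fin 4)) (![1, 2, 2, 3] : Fin 4 → ℝ) (fun _ => 1)
      ![([0, 1] : List (Fin 4)), [1, 2], [2, 3], [0, 1, 2, 3]] sigmaM Z4
      (fun k => (k : ℝ)) = 0 := by
    norm_num [zoneObj, Fin.sum_univ_four, sigmaM_cons, sigmaM_single, h01, h12, h23,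
      Matrix.cons_val_two, Matrix.cons_val_succ', vec4_three]
  have mem0 : (0 : ℝ) ∈ {x : ℝ | ∃ Z P, (IsZonePartition Z ∧ Z.card ≤ 2) ∧ (∀ k, 0 ≤ P k) ∧
      x = zoneObj (Finset.univ : Finset (Fin 4)) (![1, 2, 2, 3] : Fin 4 → ℝ) (fun _ => 1)
        ![([0, 1] : List (Fin 4)), [1, 2], [2, 3], [0, 1, 2, 3]] sigmaM Z P} :=
    ⟨Z4, fun k => (k : ℝ), ⟨hZ4, by decide⟩, fun k => Nat.cast_nonneg k, hobj.symm⟩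
  refine le_antisymm (csInf_le ⟨0, ?_⟩ mem0) (le_csInf ⟨0, mem0⟩ ?_) <;>
  · rintro x ⟨Z, P, _, _, rfl⟩
    exact obj_nonneg _ _ _ _ _ _ _

lemma partB :
    1 ≤ zStar (Finset.univ : Finset (Fin 4)) (![1, 2, 2, 3] : Fin 4 → ℝ) (fun _ => 1)
      ![([0, 1] : List (Fin 4)), [1, 2], [2, 3], [0, 1, 2, 3]] sigmaS
      (fun Z => IsZonePartition Z ∧ Z.card ≤ 2) := by
  refine le_csInf ⟨_, Z4, fun _ => 0, ⟨hZ4, by decide⟩, fun _ => le_refl 0, rfl⟩ ?_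
  rintro x ⟨Z, P, ⟨hp, hc⟩, hP, rfl⟩
  have b1 : 1 ≤ sigmaS Z ([0, 1] : List (Fin 4)) :=
    one_le_sigmaS hp (by simp : (0 : Fin 4) ∈ ([0, 1] : List (Fin 4)))
  have b2 : 1 ≤ sigmaS Z ([1, 2] : List (Fin 4)) :=
    one_le_sigmaS hp (by simp : (1 : Fin 4) ∈ ([1, 2] : List (Fin 4)))
  have b4 : 1 ≤ sigmaS Z ([0, 1, 2, 3] : List (Fin 4)) :=
    one_le_sigmaS hp (by simp : (0 : Fin 4) ∈ ([0, 1, 2, 3] : List (Fin 4)))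
  have c1 : sigmaS Z ([0, 1] : List (Fin 4)) ≤ 2 := le_trans (sigmaS_le_card _ _) hc
  have c2 : sigmaS Z ([1, 2] : List (Fin 4)) ≤ 2 := le_trans (sigmaS_le_card _ _) hc
  have c4 : sigmaS Z ([0, 1, 2, 3] : List (Fin 4)) ≤ 2 := le_trans (sigmaS_le_card _ _) hc
  have hobj : zoneObj (Finset.univ : Finset (Fin 4)) (![1, 2, 2, 3] : Fin 4 → ℝ) (fun _ => 1)
      ![([0, 1] : List (Fin 4)), [1, 2], [2, 3], [0, 1, 2, 3]] sigmaS Z P =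
      |1 - P (sigmaS Z [0, 1])| + |2 - P (sigmaS Z [1, 2])| + |2 - P (sigmaS Z [2, 3])| +
        |3 - P (sigmaS Z [0, 1, 2, 3])| := by
    simp [zoneObj, Fin.sum_univ_four]
  rw [hobj]
  rcases (by omega : sigmaS Z ([0, 1] : List (Fin 4)) = sigmaS Z ([1, 2] : List (Fin 4)) ∨
      sigmaS Z ([1, 2] : List (Fin 4)) = sigmaS Z ([0, 1, 2, 3] : List (Fin 4)) ∨
      sigmaS Z ([0, 1] : List (Fin 4)) = sigmaS Z ([0, 1, 2, 3] : List (Fin 4))) with h | h | h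
  · rw [h]
    have := abs_pair 1 2 (P (sigmaS Z ([1, 2] : List (Fin 4))))
    norm_num at this
    linarith [abs_nonneg (2 - P (sigmaS Z ([2, 3] : List (Fin 4)))),
      abs_nonneg (3 - P (sigmaS Z ([0, 1, 2, 3] : List (Fin 4))))]
  · rw [h]
    have := abs_pair 2 3 (P (sigmaS Z ([0, 1, 2, 3] : List (Fin 4))))
    norm_num at this
    linarith [abs_nonneg (2 - P (sigmaS Z ([2, 3] : List (Fin 4)))),
      abs_nonneg (1 - P (sigmaS Z ([0, 1] : List (Fin 4))))]
  · rw [h]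
    have := abs_pair 1 3 (P (sigmaS Z ([0, 1, 2, 3] : List (Fin 4))))
    norm_num at this
    linarith [abs_nonneg (2 - P (sigmaS Z ([2, 3] : List (Fin 4)))),
      abs_nonneg (2 - P (sigmaS Z ([1, 2] : List (Fin 4))))]

lemma partC :
    zStar (Finset.univ : Finset (Fin 4)) (![1, 2, 2, 3] : Fin 4 → ℝ) (fun _ => 1)
      ![([0, 1] : List (Fin 5)), [1, 2], [1, 2, 3], [2, 3, 4]] sigmaS
      (fun Z => IsZonePartition Z ∧ Z.card ≤ 5) = 0 := by
  have hZ5eq : Z5 = insert {0, 1, 3} (insert {2} {({4} : Finset (Fin 5))}) := rfl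
  have e1 : sigmaS Z5 ([0, 1] : List (Fin 5)) = 1 := by
    rw [sigmaS, hZ5eq, Finset.filter_insert, if_pos (by decide), Finset.filter_insert,
      if_neg (by decide), Finset.filter_singleton, if_neg (by decide)]
    decide
  have e2 : sigmaS Z5 ([1, 2] : List (Fin 5)) = 2 := by
    rw [sigmaS, hZ5eq, Finset.filter_insert, if_pos (by decide), Finset.filter_insert,
      if_pos (by decide), Finset.filter_singleton, if_neg (by decide)]
    decide
  have e3 : sigmaS Z5 ([1, 2, 3] : List (Fin 5)) = 2 := by
    rw [sigmaS, hZ5eq, Finset.filter_insert, if_pos (by decide), Finset.filter_insert,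
      if_pos (by decide), Finset.filter_singleton, if_neg (by decide)]
    decide
  have e4 : sigmaS Z5 ([2, 3, 4] : List (Fin 5)) = 3 := by
    rw [sigmaS, hZ5eq, Finset.filter_insert, if_pos (by decide), Finset.filter_insert,
      if_pos (by decide), Finset.filter_singleton, if_pos (by decide)]
    decide
  have hobj : zoneObj (Finset.univ : Finset (Fin 4)) (![1, 2, 2, 3] : Fin 4 → ℝ) (fun _ => 1)
      ![([0, 1] : List (Fin 5)), [1, 2], [1, 2, 3], [2, 3, 4]] sigmaS Z5
      (fun k => (k : ℝ)) = 0 := by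
    norm_num [zoneObj, Fin.sum_univ_four, e1, e2, e3, e4, Matrix.cons_val_two,
      Matrix.cons_val_succ', vec4_three]
  have mem0 : (0 : ℝ) ∈ {x : ℝ | ∃ Z P, (IsZonePartition Z ∧ Z.card ≤ 5) ∧ (∀ k, 0 ≤ P k) ∧
      x = zoneObj (Finset.univ : Finset (Fin 4)) (![1, 2, 2, 3] : Fin 4 → ℝ) (fun _ => 1)
        ![([0, 1] : List (Fin 5)), [1, 2], [1, 2, 3], [2, 3, 4]] sigmaS Z P} :=
    ⟨Z5, fun k => (k : ℝ), ⟨hZ5, by decide⟩, fun k => Nat.cast_nonneg k, hobj.symm⟩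
  refine le_antisymm (csInf_le ⟨0, ?_⟩ mem0) (le_csInf ⟨0, mem0⟩ ?_) <;>
  · rintro x ⟨Z, P, _, _, rfl⟩
    exact obj_nonneg _ _ _ _ _ _ _

lemma partD :
    1 ≤ zStar (Finset.univ : Finset (Fin 4)) (![1, 2, 2, 3] : Fin 4 → ℝ) (fun _ => 1)
      ![([0, 1] : List (Fin 5)), [1, 2], [1, 2, 3], [2, 3, 4]] sigmaM
      (fun Z => IsZonePartition Z ∧ Z.card ≤ 5) := by
  refine le_csInf ⟨_, Z5, fun _ => 0, ⟨hZ5, by decide⟩, fun _ => le_refl 0, rfl⟩ ?_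
  rintro x ⟨Z, P, ⟨hp, hc⟩, hP, rfl⟩
  have hs1 : sigmaM Z ([0, 1] : List (Fin 5)) = (if SameZone Z 0 1 then 0 else 1) + 1 := by
    rw [sigmaM_cons, sigmaM_single]
  have hs2 : sigmaM Z ([1, 2] : List (Fin 5)) = (if SameZone Z 1 2 then 0 else 1) + 1 := by
    rw [sigmaM_cons, sigmaM_single]
  have hs3 : sigmaM Z ([1, 2, 3] : List (Fin 5)) =
      (if SameZone Z 1 2 then 0 else 1) + ((if SameZone Z 2 3 then 0 else 1) + 1) := by
    rw [sigmaM_cons, sigmaM_cons, sigmaM_single]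
  have hs4 : sigmaM Z ([2, 3, 4] : List (Fin 5)) =
      (if SameZone Z 2 3 then 0 else 1) + ((if SameZone Z 3 4 then 0 else 1) + 1) := by
    rw [sigmaM_cons, sigmaM_cons, sigmaM_single]
  have hobj : zoneObj (Finset.univ : Finset (Fin 4)) (![1, 2, 2, 3] : Fin 4 → ℝ) (fun _ => 1)
      ![([0, 1] : List (Fin 5)), [1, 2], [1, 2, 3], [2, 3, 4]] sigmaM Z P =
      |1 - P (sigmaM Z [0, 1])| + |2 - P (sigmaM Z [1, 2])| + |2 - P (sigmaM Z [1, 2, 3])| +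
        |3 - P (sigmaM Z [2, 3, 4])| := by
    simp [zoneObj, Fin.sum_univ_four]
  rw [hobj, hs1, hs2, hs3, hs4]
  exact conflict P _ _ _ _ (by split <;> norm_num) (by split <;> norm_num)
    (by split <;> norm_num) (by split <;> norm_num)

end Aux

/-- The optimal values of the multiple- and single-counting zone tariff design problems
with arbitrary zones are incomparable, even on trees: on the path graph on four vertices
with OD pairs (v_1,v_2), (v_2,v_3), (v_3,v_4), (v_1,v_4), one passenger each, reference
prices 1, 2, 2, 3, unique simple paths and N = 2, we have z*_MA = 0 < z*_SA; on the path
graph on five vertices with OD pairs (v_1,v_2), (v_2,v_3), (v_2,v_4), (v_3,v_5), one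
passenger each, reference prices 1, 2, 2, 3, unique simple paths and N = 5, we have
z*_SA = 0 < z*_MA. -/
theorem examples_MA_SA_incomparable :
    (zStar (Finset.univ : Finset (Fin 4)) (![1, 2, 2, 3] : Fin 4 → ℝ) (fun _ => 1)
        ![([0, 1] : List (Fin 4)), [1, 2], [2, 3], [0, 1, 2, 3]] sigmaM
        (fun Z => IsZonePartition Z ∧ Z.card ≤ 2) = 0 ∧
      zStar (Finset.univ : Finset (Fin 4)) (![1, 2, 2, 3] : Fin 4 → ℝ) (fun _ => 1)
        ![([0, 1] : List (Fin 4)), [1, 2], [2, 3], [0, 1, 2, 3]] sigmaM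
        (fun Z => IsZonePartition Z ∧ Z.card ≤ 2) <
      zStar (Finset.univ : Finset (Fin 4)) (![1, 2, 2, 3] : Fin 4 → ℝ) (fun _ => 1)
        ![([0, 1] : List (Fin 4)), [1, 2], [2, 3], [0, 1, 2, 3]] sigmaS
        (fun Z => IsZonePartition Z ∧ Z.card ≤ 2)) ∧
    (zStar (Finset.univ : Finset (Fin 4)) (![1, 2, 2, 3] : Fin 4 → ℝ) (fun _ => 1)
        ![([0, 1] : List (Fin 5)), [1, 2], [1, 2, 3], [2, 3, 4]] sigmaS
        (fun Z => IsZonePartition Z ∧ Z.card ≤ 5) = 0 ∧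
      zStar (Finset.univ : Finset (Fin 4)) (![1, 2, 2, 3] : Fin 4 → ℝ) (fun _ => 1)
        ![([0, 1] : List (Fin 5)), [1, 2], [1, 2, 3], [2, 3, 4]] sigmaS
        (fun Z => IsZonePartition Z ∧ Z.card ≤ 5) <
      zStar (Finset.univ : Finset (Fin 4)) (![1, 2, 2, 3] : Fin 4 → ℝ) (fun _ => 1)
        ![([0, 1] : List (Fin 5)), [1, 2], [1, 2, 3], [2, 3, 4]] sigmaM
        (fun Z => IsZonePartition Z ∧ Z.card ≤ 5)) := by
  refine ⟨⟨partA, ?_⟩, partC, ?_⟩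
  · rw [partA]; exact lt_of_lt_of_le zero_lt_one partB
  · rw [partC]; exact lt_of_lt_of_le zero_lt_one partD

end
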